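/- Let P and Q be polynomials in several variables with coefficients in an integral domain S, with nonzero constant terms a and b respectively. If the ratio P/Q is a Laurent polynomial over S, then P/Q is in fact a polynomial over S whose constant term is a/b (in particular b divides a in the appropriate sense). -/

import Mathlib

open MvPolynomial

open scoped Classical

section Aux

variable {S : Type*} [CommRing S] [IsDomain S] {σ : Type*}

/-- Substituting `0` for the variable `i`. -/
noncomputable def auxEvalZero (i : σ) : MvPolynomial σ S →ₐ[S] MvPolynomial σ S :=
  aeval (fun j => if j = i then 0 else X j)

lemma auxEvalZero_X_self (i : σ) :
    auxEvalZero (S := S) i (X i) = 0 := by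
  simp [auxEvalZero]

lemma X_dvd_sub_auxEvalZero (i : σ) (p : MvPolynomial σ S) :
    (X i : MvPolynomial σ S) ∣ p - auxEvalZero i p := by
  induction p using MvPolynomial.induction_on' with
  | monomial m r =>
    by_cases hm : m i = 0
    · have : auxEvalZero (S := S) i (monomial m r) = monomial m r := by
        rw [auxEvalZero, aeval_monomial]
        have h : (m.prod fun j n => (if j = i then (0 : MvPolynomial σ S) else X j) ^ n)
            = m.prod fun j n => (X j) ^ n := by
          apply Finsupp.prod_congr
          intro j hj
          have : j ≠ i := by
            rintro rfl
            exact (Finsupp.mem_support_iff.mp hj) hm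
          simp [this]
        rw [h, algebraMap_eq, ← monomial_eq]
      simp [this]
    · have h0 : auxEvalZero (S := S) i (monomial m r) = 0 := by
        rw [auxEvalZero, aeval_monomial]
        have h : (m.prod fun j n => (if j = i then (0 : MvPolynomial σ S) else X j) ^ n) = 0 := by
          rw [Finsupp.prod]
          apply Finset.prod_eq_zero (Finsupp.mem_support_iff.mpr hm)
          simp [zero_pow hm]
        rw [h, mul_zero]
      rw [h0, sub_zero]
      rw [X_dvd_monomial]
      exact Or.inr hm
  | add p q hp hq =>
    have : p + q - auxEvalZero i (p + q) = (p - auxEvalZero i p) + (q - auxEvalZero i q) := by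
      rw [map_add]; ring
    rw [this]
    exact dvd_add hp hq

lemma X_dvd_iff_auxEvalZero (i : σ) (p : MvPolynomial σ S) :
    (X i : MvPolynomial σ S) ∣ p ↔ auxEvalZero i p = 0 := by
  constructor
  · rintro ⟨c, rfl⟩
    rw [map_mul, auxEvalZero_X_self, zero_mul]
  · intro h
    have := X_dvd_sub_auxEvalZero i p
    rwa [h, sub_zero] at this

lemma auxEvalZero_constantCoeff (i : σ) (p : MvPolynomial σ S) :
    constantCoeff (auxEvalZero i p) = constantCoeff p := by
  induction p using MvPolynomial.induction_on with
  | C a => simp [auxEvalZero]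
  | add p q hp hq => simp [hp, hq]
  | mul_X p j hp =>
    by_cases hj : j = i <;> simp [auxEvalZero, hj, hp, map_mul] <;>
      rw [← auxEvalZero] at * <;> simp [hp]

lemma prime_X_mv (i : σ) : Prime (X i : MvPolynomial σ S) := by
  refine ⟨X_ne_zero i, ?_, ?_⟩
  · intro h
    have h1 : (X i : MvPolynomial σ S) ∣ 1 := isUnit_iff_dvd_one.mp h
    rw [X_dvd_iff_auxEvalZero, map_one] at h1
    exact one_ne_zero h1
  · intro a b hab
    rw [X_dvd_iff_auxEvalZero] at hab ⊢
    rw [X_dvd_iff_auxEvalZero (p := b)]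
    rw [map_mul] at hab
    exact mul_eq_zero.mp hab

lemma dvd_of_dvd_mul_pow {α : Type*} [CommRing α] [IsDomain α] {p Q : α} (hp : Prime p)
    (hQ : ¬ p ∣ Q) : ∀ (n : ℕ) (a : α), Q ∣ a * p ^ n → Q ∣ a := by
  intro n
  induction n with
  | zero => intro a h; simpa using h
  | succ n ih =>
    intro a h
    have h1 : Q ∣ (a * p) * p ^ n := by
      rw [mul_assoc, ← pow_succ']
      exact h
    have h2 : Q ∣ a * p := ih _ h1
    obtain ⟨c, hc⟩ := h2
    have hpc : p ∣ c := by
      rcases hp.2.2 Q c ⟨a, by rw [← hc]; ring⟩ with h | h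
      · exact absurd h hQ
      · exact h
    obtain ⟨c', rfl⟩ := hpc
    exact ⟨c', mul_right_cancel₀ hp.ne_zero (by rw [hc]; ring : a * p = (Q * c') * p)⟩

lemma dvd_of_dvd_mul_prod_pow {α : Type*} [CommRing α] [IsDomain α] {Q : α} {ι : Type*}
    (s : Finset ι) (f : ι → α) (n : ι → ℕ)
    (h : ∀ i ∈ s, Prime (f i) ∧ ¬ f i ∣ Q) :
    ∀ a : α, Q ∣ a * ∏ i ∈ s, f i ^ n i → Q ∣ a := by
  induction s using Finset.induction_on with
  | empty => intro a ha; simpa using ha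
  | insert j s' hi ih =>
    intro a ha
    rw [Finset.prod_insert hi, ← mul_assoc, mul_comm a, mul_assoc] at ha
    have hj := h j (Finset.mem_insert_self j s')
    have ha' : Q ∣ (a * ∏ i ∈ s', f i ^ n i) * f j ^ n j := by
      rw [mul_comm (a * _)]; exact ha
    have := dvd_of_dvd_mul_pow hj.1 hj.2 (n j) _ ha'
    exact ih (fun i hi' => h i (Finset.mem_insert_of_mem hi')) a this

end Aux

/-- Let `P` and `Q` be multivariate polynomials over an integral domain `S`, with
nonzero constant terms `a` and `b` respectively. If `P/Q` is a Laurent polynomial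
over `S` (i.e. `P · x^m = Q · R` for some polynomial `R` and some monomial `x^m`),
then `P/Q` is in fact a polynomial over `S` with constant term `a/b` (in particular
`b` divides `a`). -/
theorem laurent_ratio_is_polynomial {S : Type*} [CommRing S] [IsDomain S] {σ : Type*}
    (P Q : MvPolynomial σ S)
    (ha : MvPolynomial.coeff 0 P ≠ 0) (hb : MvPolynomial.coeff 0 Q ≠ 0)
    (hL : ∃ (R : MvPolynomial σ S) (m : σ →₀ ℕ),
      P * MvPolynomial.monomial m (1 : S) = Q * R) :
    ∃ R : MvPolynomial σ S, P = Q * R ∧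
      MvPolynomial.coeff 0 Q * MvPolynomial.coeff 0 R = MvPolynomial.coeff 0 P := by
  obtain ⟨R0, m, hRm⟩ := hL
  have hmono : (monomial m (1 : S) : MvPolynomial σ S)
      = ∏ i ∈ m.support, (X i : MvPolynomial σ S) ^ m i := by
    rw [monomial_eq, map_one, one_mul, Finsupp.prod]
  have hdvd : Q ∣ P := by
    apply dvd_of_dvd_mul_prod_pow m.support (fun i => (X i : MvPolynomial σ S)) (fun i => m i)
    · intro i _
      refine ⟨prime_X_mv i, ?_⟩
      intro hXQ
      rw [X_dvd_iff_auxEvalZero] at hXQ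
      apply hb
      have h1 := auxEvalZero_constantCoeff i Q
      rw [hXQ, map_zero] at h1
      rw [← constantCoeff_eq]
      exact h1.symm
    · exact ⟨R0, by rw [← hmono, hRm]⟩
  obtain ⟨R, hR⟩ := hdvd
  refine ⟨R, hR, ?_⟩
  have h2 : MvPolynomial.constantCoeff P
      = MvPolynomial.constantCoeff Q * MvPolynomial.constantCoeff R := by
    rw [hR, map_mul]
  rw [constantCoeff_eq] at h2
  exact h2.symm
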